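/- Let 𝕜 be an RCLike field (ℝ or ℂ) and d : ℕ. There exist submodules X, Y of EuclideanSpace 𝕜 (Fin d) with X ⊔ Y = ⊤, Xᗮ ⊔ Y = ⊤, X ⊔ Yᗮ = ⊤, and Xᗮ ⊔ Yᗮ = ⊤ if and only if d is even. -/

import Mathlib

open Submodule FiniteDimensional

theorem exists_generic_pair_iff_even {𝕜 : Type*} [RCLike 𝕜] (d : ℕ) :
    (∃ X Y : Submodule 𝕜 (EuclideanSpace 𝕜 (Fin d)),
      X ⊔ Y = ⊤ ∧ Xᗮ ⊔ Y = ⊤ ∧ X ⊔ Yᗮ = ⊤ ∧ Xᗮ ⊔ Yᗮ = ⊤) ↔ Even d := by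
  constructor
  · rintro ⟨X, Y, h1, h2, h3, h4⟩
    have key : ∀ A B : Submodule 𝕜 (EuclideanSpace 𝕜 (Fin d)), A ⊔ B = ⊤ →
        d ≤ Module.finrank 𝕜 A + Module.finrank 𝕜 B := by
      intro A B h
      have h5 := Submodule.finrank_sup_add_finrank_inf_eq A B
      rw [h] at h5
      have ht : Module.finrank 𝕜 (⊤ : Submodule 𝕜 (EuclideanSpace 𝕜 (Fin d))) = d := by
        rw [finrank_top, finrank_euclideanSpace_fin]
      omega
    have hX := X.finrank_add_finrank_orthogonal
    have hY := Y.finrank_add_finrank_orthogonal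
    rw [finrank_euclideanSpace_fin] at hX hY
    have k1 := key _ _ h1
    have k2 := key _ _ h2
    have k3 := key _ _ h3
    have k4 := key _ _ h4
    exact ⟨Module.finrank 𝕜 X, by omega⟩
  · rintro ⟨k, rfl⟩
    let f : Fin k → EuclideanSpace 𝕜 (Fin (k + k)) := fun i => EuclideanSpace.single (Fin.castAdd k i) 1
    let g : Fin k → EuclideanSpace 𝕜 (Fin (k + k)) := fun i => EuclideanSpace.single (Fin.natAdd k i) 1
    have hfg : ∀ i j, (inner 𝕜 (f i) (g j) : 𝕜) = 0 := by
      intro i j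
      simp only [f, g, EuclideanSpace.inner_single_left, map_one, one_mul,
        EuclideanSpace.single_apply]
      rw [if_neg]
      exact fun h => absurd (congrArg Fin.val h) (by simp [Fin.castAdd, Fin.natAdd]; omega)
    have hff : ∀ i j, (inner 𝕜 (f i) (f j) : 𝕜) = if i = j then 1 else 0 := by
      intro i j
      simp only [f, EuclideanSpace.inner_single_left, map_one, one_mul,
        EuclideanSpace.single_apply]
      congr 1
      simp [Fin.ext_iff, eq_comm]
    have hgg : ∀ i j, (inner 𝕜 (g i) (g j) : 𝕜) = if i = j then 1 else 0 := by
      intro i j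
      simp only [g, EuclideanSpace.inner_single_left, map_one, one_mul,
        EuclideanSpace.single_apply]
      congr 1
      simp [Fin.ext_iff, eq_comm]
    have hgf : ∀ i j, (inner 𝕜 (g i) (f j) : 𝕜) = 0 := by
      intro i j
      simp only [f, g, EuclideanSpace.inner_single_left, map_one, one_mul,
        EuclideanSpace.single_apply]
      rw [if_neg]
      exact fun h => absurd (congrArg Fin.val h) (by simp [Fin.castAdd, Fin.natAdd]; omega)
    set X := Submodule.span 𝕜 (Set.range f) with hXdef
    set X' := Submodule.span 𝕜 (Set.range g) with hX'def
    set Y := Submodule.span 𝕜 (Set.range fun i => f i + g i) with hYdef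
    set Y' := Submodule.span 𝕜 (Set.range fun i => f i - g i) with hY'def
    -- a submodule containing all f i and g i is ⊤
    have htop : ∀ Z : Submodule 𝕜 (EuclideanSpace 𝕜 (Fin (k + k))), (∀ i, f i ∈ Z) → (∀ i, g i ∈ Z) → Z = ⊤ := by
      intro Z hf hg
      rw [eq_top_iff, ← (EuclideanSpace.basisFun (Fin (k + k)) 𝕜).toBasis.span_eq,
        Submodule.span_le]
      rintro _ ⟨j, rfl⟩
      simp only [OrthonormalBasis.coe_toBasis, EuclideanSpace.basisFun_apply]
      exact Fin.addCases (fun i => hf i) (fun i => hg i) j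
    -- the four sups
    have hfX : ∀ i, f i ∈ X := fun i => subset_span ⟨i, rfl⟩
    have hgX' : ∀ i, g i ∈ X' := fun i => subset_span ⟨i, rfl⟩
    have hY1 : ∀ i, f i + g i ∈ Y := fun i => subset_span ⟨i, rfl⟩
    have hY'1 : ∀ i, f i - g i ∈ Y' := fun i => subset_span ⟨i, rfl⟩
    have sXY : X ⊔ Y = ⊤ := by
      refine htop _ (fun i => le_sup_left (α := Submodule 𝕜 (EuclideanSpace 𝕜 (Fin (k + k)))) (hfX i)) (fun i => ?_)
      have : g i = (f i + g i) - f i := by abel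
      rw [this]
      exact sub_mem (le_sup_right (α := Submodule 𝕜 (EuclideanSpace 𝕜 (Fin (k + k)))) (hY1 i))
        (le_sup_left (α := Submodule 𝕜 (EuclideanSpace 𝕜 (Fin (k + k)))) (hfX i))
    have sX'Y : X' ⊔ Y = ⊤ := by
      refine htop _ (fun i => ?_) (fun i => le_sup_left (α := Submodule 𝕜 (EuclideanSpace 𝕜 (Fin (k + k)))) (hgX' i))
      have : f i = (f i + g i) - g i := by abel
      rw [this]
      exact sub_mem (le_sup_right (α := Submodule 𝕜 (EuclideanSpace 𝕜 (Fin (k + k)))) (hY1 i))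
        (le_sup_left (α := Submodule 𝕜 (EuclideanSpace 𝕜 (Fin (k + k)))) (hgX' i))
    have sXY' : X ⊔ Y' = ⊤ := by
      refine htop _ (fun i => le_sup_left (α := Submodule 𝕜 (EuclideanSpace 𝕜 (Fin (k + k)))) (hfX i)) (fun i => ?_)
      have : g i = f i - (f i - g i) := by abel
      rw [this]
      exact sub_mem (le_sup_left (α := Submodule 𝕜 (EuclideanSpace 𝕜 (Fin (k + k)))) (hfX i))
        (le_sup_right (α := Submodule 𝕜 (EuclideanSpace 𝕜 (Fin (k + k)))) (hY'1 i))
    have sX'Y' : X' ⊔ Y' = ⊤ := by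
      refine htop _ (fun i => ?_) (fun i => le_sup_left (α := Submodule 𝕜 (EuclideanSpace 𝕜 (Fin (k + k)))) (hgX' i))
      have : f i = (f i - g i) + g i := by abel
      rw [this]
      exact add_mem (le_sup_right (α := Submodule 𝕜 (EuclideanSpace 𝕜 (Fin (k + k)))) (hY'1 i))
        (le_sup_left (α := Submodule 𝕜 (EuclideanSpace 𝕜 (Fin (k + k)))) (hgX' i))
    have sXX' : X ⊔ X' = ⊤ :=
      htop _ (fun i => le_sup_left (α := Submodule 𝕜 (EuclideanSpace 𝕜 (Fin (k + k)))) (hfX i))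
        (fun i => le_sup_right (α := Submodule 𝕜 (EuclideanSpace 𝕜 (Fin (k + k)))) (hgX' i))
    have sYY' : Y ⊔ Y' = ⊤ := by
      refine htop _ (fun i => ?_) (fun i => ?_)
      · have h2 : (f i + g i) + (f i - g i) = (2 : 𝕜) • f i := by
          rw [two_smul]; abel
        have heq : f i = (2 : 𝕜)⁻¹ • ((f i + g i) + (f i - g i)) := by
          rw [h2, inv_smul_smul₀ (two_ne_zero : (2 : 𝕜) ≠ 0)]
        rw [heq]
        exact smul_mem _ _ (add_mem (le_sup_left (α := Submodule 𝕜 (EuclideanSpace 𝕜 (Fin (k + k)))) (hY1 i))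
          (le_sup_right (α := Submodule 𝕜 (EuclideanSpace 𝕜 (Fin (k + k)))) (hY'1 i)))
      · have h2 : (f i + g i) - (f i - g i) = (2 : 𝕜) • g i := by
          rw [two_smul]; abel
        have heq : g i = (2 : 𝕜)⁻¹ • ((f i + g i) - (f i - g i)) := by
          rw [h2, inv_smul_smul₀ (two_ne_zero : (2 : 𝕜) ≠ 0)]
        rw [heq]
        exact smul_mem _ _ (sub_mem (le_sup_left (α := Submodule 𝕜 (EuclideanSpace 𝕜 (Fin (k + k)))) (hY1 i))
          (le_sup_right (α := Submodule 𝕜 (EuclideanSpace 𝕜 (Fin (k + k)))) (hY'1 i)))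
    -- orthogonality
    have horth : ∀ A A' : Submodule 𝕜 (EuclideanSpace 𝕜 (Fin (k + k))), A' ≤ Aᗮ → A ⊔ A' = ⊤ → Aᗮ = A' := by
      intro A A' hle hsup
      calc Aᗮ = (A' ⊔ A) ⊓ Aᗮ := by rw [sup_comm, hsup, top_inf_eq]
        _ = A' ⊔ (A ⊓ Aᗮ) := sup_inf_assoc_of_le _ hle
        _ = A' := by rw [A.inf_orthogonal_eq_bot, sup_bot_eq]
    have hXorth : Xᗮ = X' := by
      refine horth X X' ?_ sXX'
      rw [hXdef, hX'def, ← Submodule.isOrtho_iff_le, Submodule.isOrtho_comm]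
      rw [Submodule.isOrtho_span]
      rintro _ ⟨i, rfl⟩ _ ⟨j, rfl⟩
      exact hfg i j
    have hYorth : Yᗮ = Y' := by
      refine horth Y Y' ?_ sYY'
      rw [hYdef, hY'def, ← Submodule.isOrtho_iff_le, Submodule.isOrtho_comm]
      rw [Submodule.isOrtho_span]
      rintro _ ⟨i, rfl⟩ _ ⟨j, rfl⟩
      simp only [inner_add_left, inner_sub_right, hfg, hgf, hff, hgg]
      ring_nf
    exact ⟨X, Y, sXY, by rw [hXorth]; exact sX'Y, by rw [hYorth]; exact sXY',
      by rw [hXorth, hYorth]; exact sX'Y'⟩
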